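/- Let Ψ : (Y₁ →^ϱ Y₂, ⋆, ⟦−,−⟧) → (M →^∂ N, ·, {−,−}) be a morphism of braided crossed modules of Lie K-algebras with (Y₁ →^ϱ Y₂) perfect as a braided crossed module. If f : (X₁ →^ρ X₂, *, ⦅−,−⦆) → (M →^∂ N, ·, {−,−}) is a central extension and h is a morphism with Ψ = f ∘ h, then h is the unique morphism satisfying this equality. -/

import Mathlib

universe u

/-- The Lie bracket as a bilinear map. -/
def bracketMap (K : Type u) [CommRing K] (M : Type u) [LieRing M] [LieAlgebra K M] :
    M →ₗ[K] M →ₗ[K] M :=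
  LinearMap.mk₂ K (fun a b => ⁅a, b⁆) add_lie smul_lie lie_add lie_smul

/-- Axioms for a crossed module of Lie `K`-algebras `(d : M → N, act)`. -/
structure LieXMod (K : Type u) [CommRing K] (M N : Type u)
    [LieRing M] [LieAlgebra K M] [LieRing N] [LieAlgebra K N]
    (d : M →ₗ⁅K⁆ N) (act : N →ₗ[K] M →ₗ[K] M) : Prop where
  act_lie : ∀ n n' m, act ⁅n, n'⁆ m = act n (act n' m) - act n' (act n m)
  lie_act : ∀ n m m', act n ⁅m, m'⁆ = ⁅act n m, m'⁆ + ⁅m, act n m'⁆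
  equivar : ∀ n m, d (act n m) = ⁅n, d m⁆
  peiffer : ∀ m m', act (d m) m' = ⁅m, m'⁆

/-- Axioms `BLie1`–`BLie6` for a braiding on a crossed module of Lie algebras. -/
structure LieBraiding (K : Type u) [CommRing K] (M N : Type u)
    [LieRing M] [LieAlgebra K M] [LieRing N] [LieAlgebra K N]
    (d : M →ₗ⁅K⁆ N) (act : N →ₗ[K] M →ₗ[K] M)
    (br : N →ₗ[K] N →ₗ[K] M) : Prop where
  b1 : ∀ n n', d (br n n') = ⁅n, n'⁆
  b2 : ∀ m m', br (d m) (d m') = ⁅m, m'⁆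
  b3 : ∀ m n, br (d m) n = - act n m
  b4 : ∀ n m, br n (d m) = act n m
  b5 : ∀ n n' n'', br n ⁅n', n''⁆ = br ⁅n, n'⁆ n'' - br ⁅n, n''⁆ n'
  b6 : ∀ n n' n'', br ⁅n, n'⁆ n'' = br n ⁅n', n''⁆ - br n' ⁅n, n''⁆

/-- `T`, together with the bilinear pairing `t`, is the non-abelian tensor product
of the Lie algebras `A` and `B` acting on each other via `actAB` and `actBA`:
it satisfies the defining relations of the presentation and the universal property. -/
structure IsNATensor (K : Type u) [CommRing K] (A B : Type u)
    [LieRing A] [LieAlgebra K A] [LieRing B] [LieAlgebra K B]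
    (actAB : A →ₗ[K] B →ₗ[K] B) (actBA : B →ₗ[K] A →ₗ[K] A)
    (T : Type u) [LieRing T] [LieAlgebra K T]
    (t : A →ₗ[K] B →ₗ[K] T) : Prop where
  rel3a : ∀ a a' b, t ⁅a, a'⁆ b = t a (actAB a' b) - t a' (actAB a b)
  rel3b : ∀ a b b', t a ⁅b, b'⁆ = t (actBA b' a) b - t (actBA b a) b'
  rel4 : ∀ a b a' b', ⁅t a b, t a' b'⁆ = - t (actBA b a) (actAB a' b')
  lift : ∀ (C : Type u) [LieRing C] [LieAlgebra K C] (f : A →ₗ[K] B →ₗ[K] C),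
      (∀ a a' b, f ⁅a, a'⁆ b = f a (actAB a' b) - f a' (actAB a b)) →
      (∀ a b b', f a ⁅b, b'⁆ = f (actBA b' a) b - f (actBA b a) b') →
      (∀ a b a' b', ⁅f a b, f a' b'⁆ = - f (actBA b a) (actAB a' b')) →
      ∃! φ : T →ₗ⁅K⁆ C, ∀ a b, φ (t a b) = f a b

/-- `T` with pairing `t` is the non-abelian tensor square of `N` (adjoint actions). -/
def IsNATensorSq (K : Type u) [CommRing K] (N : Type u) [LieRing N] [LieAlgebra K N]
    (T : Type u) [LieRing T] [LieAlgebra K T] (t : N →ₗ[K] N →ₗ[K] T) : Prop :=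
  IsNATensor K N N (bracketMap K N) (bracketMap K N) T t


/-- The equalizer of two Lie algebra homomorphisms, as a Lie subalgebra. -/
def lieEqLocus {K A B : Type u} [CommRing K] [LieRing A] [LieAlgebra K A]
    [LieRing B] [LieAlgebra K B] (g h : A →ₗ⁅K⁆ B) : LieSubalgebra K A where
  carrier := {a | g a = h a}
  add_mem' := by
    intro a b ha hb
    show g (a + b) = h (a + b)
    rw [map_add g, map_add h]
    exact congrArg₂ (· + ·) ha hb
  zero_mem' := by show g 0 = h 0; rw [map_zero g, map_zero h]
  smul_mem' := by
    intro c a ha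
    show g (c • a) = h (c • a)
    rw [map_smul g, map_smul h]
    exact congrArg (c • ·) ha
  lie_mem' := by
    intro a b ha hb
    show g ⁅a, b⁆ = h ⁅a, b⁆
    rw [LieHom.map_lie, LieHom.map_lie]
    exact congrArg₂ (⁅·, ·⁆) ha hb

theorem uniqueness_of_lift (K : Type u) [CommRing K] (M N : Type u) [LieRing M] [LieAlgebra K M]
    [LieRing N] [LieAlgebra K N] (d : M →ₗ⁅K⁆ N) (act : N →ₗ[K] M →ₗ[K] M)
    (br : N →ₗ[K] N →ₗ[K] M) (hX : LieXMod K M N d act)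
    (hB : LieBraiding K M N d act br)
    (Y₁ Y₂ : Type u) [LieRing Y₁] [LieAlgebra K Y₁] [LieRing Y₂] [LieAlgebra K Y₂]
    (δY : Y₁ →ₗ⁅K⁆ Y₂) (actY : Y₂ →ₗ[K] Y₁ →ₗ[K] Y₁) (brY : Y₂ →ₗ[K] Y₂ →ₗ[K] Y₁)
    (hYX : LieXMod K Y₁ Y₂ δY actY) (hYB : LieBraiding K Y₁ Y₂ δY actY brY)
    (hYperf : LieSubalgebra.lieSpan K Y₁ {x : Y₁ | ∃ y y' : Y₂, x = brY y y'} = ⊤ ∧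
      LieSubalgebra.lieSpan K Y₂ {x : Y₂ | ∃ a b : Y₂, x = ⁅a, b⁆} = ⊤)
    (Ψ₁ : Y₁ →ₗ⁅K⁆ M) (Ψ₂ : Y₂ →ₗ⁅K⁆ N)
    (hΨ_act : ∀ (y : Y₂) (η : Y₁), Ψ₁ (actY y η) = act (Ψ₂ y) (Ψ₁ η))
    (hΨ_d : ∀ η : Y₁, d (Ψ₁ η) = Ψ₂ (δY η))
    (hΨ_br : ∀ y y' : Y₂, Ψ₁ (brY y y') = br (Ψ₂ y) (Ψ₂ y'))
    (X₁ X₂ : Type u) [LieRing X₁] [LieAlgebra K X₁] [LieRing X₂] [LieAlgebra K X₂]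
    (δX : X₁ →ₗ⁅K⁆ X₂) (actX : X₂ →ₗ[K] X₁ →ₗ[K] X₁) (brX : X₂ →ₗ[K] X₂ →ₗ[K] X₁)
    (hXX : LieXMod K X₁ X₂ δX actX) (hXB : LieBraiding K X₁ X₂ δX actX brX)
    (f₁ : X₁ →ₗ⁅K⁆ M) (f₂ : X₂ →ₗ⁅K⁆ N)
    (hf_act : ∀ (x : X₂) (ξ : X₁), f₁ (actX x ξ) = act (f₂ x) (f₁ ξ))
    (hf_d : ∀ ξ : X₁, d (f₁ ξ) = f₂ (δX ξ))
    (hf_br : ∀ x y : X₂, f₁ (brX x y) = br (f₂ x) (f₂ y))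
    (hf_surj₁ : Function.Surjective f₁) (hf_surj₂ : Function.Surjective f₂)
    (hf_c₁ : ∀ ξ : X₁, f₁ ξ = 0 → ∀ x : X₂, actX x ξ = 0)
    (hf_c₂ : ∀ x : X₂, f₂ x = 0 → ∀ y : X₂, brX x y = 0 ∧ brX y x = 0)
    (h₁ : Y₁ →ₗ⁅K⁆ X₁) (h₂ : Y₂ →ₗ⁅K⁆ X₂)
    (hh_act : ∀ (y : Y₂) (η : Y₁), h₁ (actY y η) = actX (h₂ y) (h₁ η))
    (hh_d : ∀ η : Y₁, δX (h₁ η) = h₂ (δY η))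
    (hh_br : ∀ y y' : Y₂, h₁ (brY y y') = brX (h₂ y) (h₂ y'))
    (hh_comm₁ : ∀ η : Y₁, f₁ (h₁ η) = Ψ₁ η) (hh_comm₂ : ∀ y : Y₂, f₂ (h₂ y) = Ψ₂ y)
    (g₁ : Y₁ →ₗ⁅K⁆ X₁) (g₂ : Y₂ →ₗ⁅K⁆ X₂)
    (hg_act : ∀ (y : Y₂) (η : Y₁), g₁ (actY y η) = actX (g₂ y) (g₁ η))
    (hg_d : ∀ η : Y₁, δX (g₁ η) = g₂ (δY η))
    (hg_br : ∀ y y' : Y₂, g₁ (brY y y') = brX (g₂ y) (g₂ y'))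
    (hg_comm₁ : ∀ η : Y₁, f₁ (g₁ η) = Ψ₁ η) (hg_comm₂ : ∀ y : Y₂, f₂ (g₂ y) = Ψ₂ y) :
    g₁ = h₁ ∧ g₂ = h₂ := by
  -- elements in ker f₂ are bracket-central
  have hker : ∀ y : Y₂, f₂ (g₂ y - h₂ y) = 0 := by
    intro y; simp [map_sub, hg_comm₂, hh_comm₂]
  have hcent : ∀ c : X₂, f₂ c = 0 → ∀ x : X₂, ⁅c, x⁆ = 0 ∧ ⁅x, c⁆ = 0 := by
    intro c hc x
    have h1 := hXB.b1 c x
    have h2 := hXB.b1 x c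
    have hb := hf_c₂ c hc x
    constructor
    · rw [← h1, hb.1, map_zero δX]
    · rw [← h2, hb.2, map_zero δX]
  -- g₂ = h₂
  have hg2 : g₂ = h₂ := by
    have hle : LieSubalgebra.lieSpan K Y₂ {x : Y₂ | ∃ a b : Y₂, x = ⁅a, b⁆} ≤
        lieEqLocus g₂ h₂ := by
      rw [LieSubalgebra.lieSpan_le]
      rintro _ ⟨a, b, rfl⟩
      show g₂ ⁅a, b⁆ = h₂ ⁅a, b⁆
      rw [LieHom.map_lie, LieHom.map_lie]
      have ha := (hcent _ (hker a) (g₂ b)).1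
      have hb := (hcent _ (hker b) (h₂ a)).2
      rw [sub_lie] at ha
      rw [lie_sub] at hb
      exact (sub_eq_zero.mp ha).trans (sub_eq_zero.mp hb)
    ext y
    have : y ∈ lieEqLocus g₂ h₂ := hle (hYperf.2 ▸ LieSubalgebra.mem_top y)
    exact this
  -- g₁ = h₁
  have hle1 : LieSubalgebra.lieSpan K Y₁ {x : Y₁ | ∃ y y' : Y₂, x = brY y y'} ≤
      lieEqLocus g₁ h₁ := by
    rw [LieSubalgebra.lieSpan_le]
    rintro _ ⟨y, y', rfl⟩
    show g₁ (brY y y') = h₁ (brY y y')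
    rw [hg_br, hh_br]
    have ha := (hf_c₂ _ (hker y) (g₂ y')).1
    have hb := (hf_c₂ _ (hker y') (h₂ y)).2
    simp only [map_sub, LinearMap.sub_apply] at ha hb
    exact (sub_eq_zero.mp ha).trans (sub_eq_zero.mp hb)
  have hg1 : g₁ = h₁ := by
    ext η
    exact hle1 (hYperf.1 ▸ LieSubalgebra.mem_top η)
  exact ⟨hg1, hg2⟩
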